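/- Let n, p ≥ 1, let x_i ∈ ℝ^p for i = 1,…,n, y ∈ ℝ^n, λ ≥ 0, and let b : ℝ → ℝ be differentiable with derivative μ = b′. Let β̂_L be a global minimizer of the lasso objective L(β) = −(1/n)∑_{i=1}^n {y_i x_iᵀβ − b(x_iᵀβ)} + λ‖β‖₁, and let β̂_DS minimize ‖β‖₁ over the generalized Dantzig selector feasible set {β ∈ ℝ^p : (1/n) max_{1≤j≤p} |∑_{i=1}^n x_{ij}(y_i − μ(x_iᵀβ))| ≤ λ}. Then ‖β̂_DS‖₁ ≤ ‖β̂_L‖₁. -/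

import Mathlib

/-- Since the GLM lasso solution lies in the generalized Dantzig selector
feasible set, the ℓ₁-minimal feasible point has no larger ℓ₁ norm:
`‖β̂_DS‖₁ ≤ ‖β̂_L‖₁`. -/
theorem stmt_8 (n p : ℕ) (hn : 1 ≤ n) (hp : 1 ≤ p)
    (x : Fin n → Fin p → ℝ) (y : Fin n → ℝ) (lam : ℝ) (hlam : 0 ≤ lam)
    (b μ : ℝ → ℝ) (hb : ∀ t, HasDerivAt b (μ t) t)
    (L : (Fin p → ℝ) → ℝ)
    (hL : ∀ β, L β =
      -(1 / (n : ℝ)) * ∑ i, (y i * ∑ j, x i j * β j - b (∑ j, x i j * β j)) +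
        lam * ∑ j, |β j|)
    (Θ : Set (Fin p → ℝ))
    (hΘ : Θ = {β | ∀ j, (1 / (n : ℝ)) * |∑ i, x i j * (y i - μ (∑ j', x i j' * β j'))| ≤ lam})
    (βL βDS : Fin p → ℝ)
    (hβL : ∀ β, L βL ≤ L β)
    (hβDSmem : βDS ∈ Θ)
    (hβDSmin : ∀ β ∈ Θ, ∑ j, |βDS j| ≤ ∑ j, |β j|) :
    ∑ j, |βDS j| ≤ ∑ j, |βL j| := by
  apply hβDSmin
  rw [hΘ]
  intro j
  have hnpos : (0:ℝ) < (n:ℝ) := by exact_mod_cast Nat.lt_of_lt_of_le Nat.zero_lt_one hn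
  set c : Fin n → ℝ := fun i => ∑ j', x i j' * βL j' with hc
  set a : Fin n → ℝ := fun i => x i j with ha
  set f : ℝ → ℝ :=
    fun t => -(1 / (n : ℝ)) * ∑ i, (y i * (c i + t * a i) - b (c i + t * a i)) with hf
  set d : ℝ := -(1 / (n : ℝ)) * ∑ i, (y i * a i - μ (c i) * a i) with hd
  -- derivative of the smooth part
  have hderiv : HasDerivAt f d 0 := by
    apply HasDerivAt.const_mul
    apply HasDerivAt.fun_sum
    intro i _
    have hg : HasDerivAt (fun t : ℝ => c i + t * a i) (a i) 0 := by
      simpa using ((hasDerivAt_id (0:ℝ)).mul_const (a i)).const_add (c i)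
    have hby : HasDerivAt (fun t : ℝ => b (c i + t * a i)) (μ (c i) * a i) 0 := by
      have := (hb (c i + 0 * a i)).comp 0 hg
      simpa [Function.comp_def] using this
    simpa using (hg.const_mul (y i)).fun_sub hby
  -- key inequality from minimality of βL
  have key : ∀ t : ℝ, f 0 - f t ≤ lam * |t| := by
    intro t
    have hmin := hβL (Function.update βL j (βL j + t))
    rw [hL, hL] at hmin
    have hsum : ∀ i, ∑ j', x i j' * (Function.update βL j (βL j + t)) j'
        = c i + t * a i := by
      intro i
      have h1 : ∀ j', x i j' * (Function.update βL j (βL j + t)) j'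
          = x i j' * βL j' + (if j' = j then t * a i else 0) := by
        intro j'
        by_cases h : j' = j
        · subst h; simp [Function.update, ha]; ring
        · simp [Function.update_of_ne h, h]
      rw [Finset.sum_congr rfl (fun j' _ => h1 j'), Finset.sum_add_distrib]
      simp [hc]
    have habs : ∑ k, |(Function.update βL j (βL j + t)) k|
        ≤ (∑ k, |βL k|) + |t| := by
      have h1 : ∑ k, (|(Function.update βL j (βL j + t)) k| - |βL k|)
          = |βL j + t| - |βL j| := by
        rw [Finset.sum_eq_single j]
        · simp
        · intro k _ hk; simp [Function.update_of_ne hk]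
        · simp
      have h2 : |βL j + t| - |βL j| ≤ |t| := by
        have := abs_add_le (βL j) t
        linarith
      have h3 : ∑ k, (|(Function.update βL j (βL j + t)) k| - |βL k|)
          = (∑ k, |(Function.update βL j (βL j + t)) k|) - ∑ k, |βL k| :=
        Finset.sum_sub_distrib _ _
      linarith
    have hmin' : f 0 + lam * ∑ k, |βL k|
        ≤ f t + lam * ∑ k, |(Function.update βL j (βL j + t)) k| := by
      have e1 : ∑ i, (y i * ∑ j', x i j' * βL j' - b (∑ j', x i j' * βL j'))
          = ∑ i, (y i * (c i + (0:ℝ) * a i) - b (c i + (0:ℝ) * a i)) := by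
        simp [hc]
      have e2 : ∑ i, (y i * ∑ j', x i j' * (Function.update βL j (βL j + t)) j'
            - b (∑ j', x i j' * (Function.update βL j (βL j + t)) j'))
          = ∑ i, (y i * (c i + t * a i) - b (c i + t * a i)) :=
        Finset.sum_congr rfl fun i _ => by rw [hsum i]
      rw [e1, e2] at hmin
      exact hmin
    nlinarith [mul_le_mul_of_nonneg_left habs hlam]
  -- slope limits
  have hslope := hasDerivAt_iff_tendsto_slope.mp hderiv
  have hlow : -lam ≤ d := by
    have h1 : Filter.Tendsto (slope f 0) (nhdsWithin 0 (Set.Ioi 0)) (nhds d) :=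
      hslope.mono_left (nhdsWithin_mono _ (fun t ht => ne_of_gt ht))
    refine ge_of_tendsto h1 ?_
    filter_upwards [self_mem_nhdsWithin] with t ht
    have ht' : (0:ℝ) < t := ht
    have hk := key t
    rw [abs_of_pos ht'] at hk
    rw [slope_def_field, sub_zero]
    rw [le_div_iff₀ ht']
    linarith
  have hup : d ≤ lam := by
    have h1 : Filter.Tendsto (slope f 0) (nhdsWithin 0 (Set.Iio 0)) (nhds d) :=
      hslope.mono_left (nhdsWithin_mono _ (fun t ht => ne_of_lt ht))
    refine le_of_tendsto h1 ?_
    filter_upwards [self_mem_nhdsWithin] with t ht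
    have ht' : t < 0 := ht
    have hk := key t
    rw [abs_of_neg ht'] at hk
    rw [slope_def_field, sub_zero]
    rw [div_le_iff_of_neg ht']
    linarith
  have habsd : |d| ≤ lam := abs_le.mpr ⟨hlow, hup⟩
  have hS : ∑ i, x i j * (y i - μ (∑ j', x i j' * βL j'))
      = ∑ i, (y i * a i - μ (c i) * a i) :=
    Finset.sum_congr rfl fun i _ => by rw [hc, ha]; ring
  show (1 / (n : ℝ)) * |∑ i, x i j * (y i - μ (∑ j', x i j' * βL j'))| ≤ lam
  rw [hS]
  have : |d| = (1 / (n : ℝ)) * |∑ i, (y i * a i - μ (c i) * a i)| := by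
    rw [hd, abs_mul, abs_neg, abs_of_pos (by positivity : (0:ℝ) < 1 / (n:ℝ))]
  linarith [this ▸ habsd]
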